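/- Let W : ℝ → Matrix (Fin n) (Fin n) ℝ be a differentiable family of invertible symmetric positive definite matrices with M(θ) = W(θ)⁻¹, and μ > 0. Then -μ·W(θ) ≼ W'(θ) ≼ μ·W(θ) holds if and only if -μ·M(θ) ≼ M'(θ) ≼ μ·M(θ). -/

import Mathlib

open Matrix

/-- Entrywise derivative of a matrix-valued function. -/
noncomputable def matDeriv {n : ℕ} (W : ℝ → Matrix (Fin n) (Fin n) ℝ) (θ : ℝ) :
    Matrix (Fin n) (Fin n) ℝ :=
  Matrix.of fun i j => deriv (fun t => W t i j) θ

lemma diff_det {n : ℕ} {A : ℝ → Matrix (Fin n) (Fin n) ℝ}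
    (h : ∀ i j, Differentiable ℝ fun t => A t i j) :
    Differentiable ℝ fun t => (A t).det := by
  simp only [Matrix.det_apply']
  apply Differentiable.fun_sum
  intro σ _
  apply Differentiable.const_mul
  intro x
  exact (DifferentiableAt.fun_finsetProd (u := Finset.univ)
    (fun i _ => (h (σ i) i) x))

lemma diff_inv_entry {n : ℕ} {A : ℝ → Matrix (Fin n) (Fin n) ℝ}
    (h : ∀ i j, Differentiable ℝ fun t => A t i j)
    (hdet : ∀ t, (A t).det ≠ 0) (i j : Fin n) :
    Differentiable ℝ fun t => (A t)⁻¹ i j := by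
  have key : ∀ t, (A t)⁻¹ i j = ((A t).det)⁻¹ * (A t).adjugate i j := by
    intro t
    rw [Matrix.inv_def, Matrix.smul_apply, Ring.inverse_eq_inv', smul_eq_mul]
  simp only [key]
  apply Differentiable.mul
  · exact (diff_det h).inv hdet
  · simp only [Matrix.adjugate_apply]
    apply diff_det
    intro k l
    rcases eq_or_ne k j with rfl | hk
    · simp only [Matrix.updateRow_self]
      exact differentiable_const _
    · simp only [Matrix.updateRow_ne hk]
      exact h k l

lemma matDeriv_mul {n : ℕ} (A B : ℝ → Matrix (Fin n) (Fin n) ℝ)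
    (hA : ∀ i j, Differentiable ℝ fun t => A t i j)
    (hB : ∀ i j, Differentiable ℝ fun t => B t i j) (θ : ℝ) :
    matDeriv (fun t => A t * B t) θ =
      matDeriv A θ * B θ + A θ * matDeriv B θ := by
  ext i j
  simp only [matDeriv, Matrix.of_apply, Matrix.add_apply, Matrix.mul_apply]
  rw [deriv_fun_sum (A := fun k t => A t i k * B t k j) (fun k _ => ((hA i k).mul (hB k j)).differentiableAt)]
  rw [← Finset.sum_add_distrib]
  congr 1; funext k
  rw [deriv_fun_mul ((hA i k) θ) ((hB k j) θ)]

/-- congruence by the inverse of a positive definite matrix preserves PSD both ways -/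
lemma congr_psd {n : ℕ} {A : Matrix (Fin n) (Fin n) ℝ} (hA : A.PosDef)
    (X : Matrix (Fin n) (Fin n) ℝ) :
    (A⁻¹ * X * A⁻¹).PosSemidef ↔ X.PosSemidef := by
  have hinv : IsUnit A := (Matrix.isUnit_iff_isUnit_det A).mpr
    (isUnit_iff_ne_zero.mpr hA.det_pos.ne')
  have hAH : Aᴴ = A := hA.1
  have hAiH : (A⁻¹)ᴴ = A⁻¹ := by rw [Matrix.conjTranspose_nonsing_inv, hAH]
  constructor
  · intro h
    have := h.mul_mul_conjTranspose_same A
    rw [hAH] at this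
    have e : A * (A⁻¹ * X * A⁻¹) * A = X := by
      rw [← Matrix.mul_assoc, ← Matrix.mul_assoc,
        Matrix.mul_nonsing_inv _ ((Matrix.isUnit_iff_isUnit_det A).mp hinv),
        Matrix.one_mul, Matrix.mul_assoc,
        Matrix.nonsing_inv_mul _ ((Matrix.isUnit_iff_isUnit_det A).mp hinv),
        Matrix.mul_one]
    rwa [e] at this
  · intro h
    have := h.mul_mul_conjTranspose_same A⁻¹
    rwa [hAiH] at this

theorem dual_metric_loewner_bound_iff {n : ℕ}
    (W M : ℝ → Matrix (Fin n) (Fin n) ℝ) (μ : ℝ) (hμ : 0 < μ)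
    (hdiff : ∀ i j : Fin n, Differentiable ℝ fun θ => W θ i j)
    (hpd : ∀ θ : ℝ, (W θ).PosDef)
    (hinv : ∀ θ : ℝ, IsUnit (W θ))
    (hM : ∀ θ : ℝ, M θ = (W θ)⁻¹) :
    (∀ θ : ℝ, (μ • W θ - matDeriv W θ).PosSemidef ∧
        (matDeriv W θ + μ • W θ).PosSemidef) ↔
      (∀ θ : ℝ, (μ • M θ - matDeriv M θ).PosSemidef ∧
        (matDeriv M θ + μ • M θ).PosSemidef) := by
  have hdet : ∀ t, (W t).det ≠ 0 := fun t => (hpd t).det_pos.ne'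
  have hdetU : ∀ t, IsUnit (W t).det := fun t => isUnit_iff_ne_zero.mpr (hdet t)
  have hMdiff : ∀ i j, Differentiable ℝ fun t => M t i j := by
    intro i j
    have : (fun t => M t i j) = fun t => (W t)⁻¹ i j := by funext t; rw [hM t]
    rw [this]
    exact diff_inv_entry hdiff hdet i j
  -- W t * M t = 1
  have hWM : (fun t => W t * M t) = fun _ => (1 : Matrix (Fin n) (Fin n) ℝ) := by
    funext t; rw [hM t, Matrix.mul_nonsing_inv _ (hdetU t)]
  have hMW : ∀ t, M t * W t = 1 := by
    intro t; rw [hM t, Matrix.nonsing_inv_mul _ (hdetU t)]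
  -- derivative formula : M' = - M W' M
  have hMderiv : ∀ θ, matDeriv M θ = -(M θ * matDeriv W θ * M θ) := by
    intro θ
    have h0 : matDeriv (fun t => W t * M t) θ = 0 := by
      rw [hWM]
      ext i j
      simp [matDeriv]
    rw [matDeriv_mul W M hdiff hMdiff θ] at h0
    have h1 : M θ * (matDeriv W θ * M θ + W θ * matDeriv M θ) = 0 := by
      rw [h0, Matrix.mul_zero]
    rw [Matrix.mul_add, ← Matrix.mul_assoc, ← Matrix.mul_assoc, hMW θ,
      Matrix.one_mul] at h1
    exact eq_neg_of_add_eq_zero_right h1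
  -- key congruence identities
  have keyM : ∀ θ, μ • M θ = M θ * (μ • W θ) * M θ := by
    intro θ
    rw [Matrix.mul_smul, Matrix.smul_mul, hMW θ, Matrix.one_mul]
  have key1 : ∀ θ, μ • M θ - matDeriv M θ = M θ * (matDeriv W θ + μ • W θ) * M θ := by
    intro θ
    rw [hMderiv θ, keyM θ, Matrix.mul_add, Matrix.add_mul]
    abel
  have key2 : ∀ θ, matDeriv M θ + μ • M θ = M θ * (μ • W θ - matDeriv W θ) * M θ := by
    intro θ
    rw [hMderiv θ, keyM θ, Matrix.mul_sub, Matrix.sub_mul]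
    abel
  constructor
  · intro h θ
    obtain ⟨h1, h2⟩ := h θ
    refine ⟨?_, ?_⟩
    · rw [key1 θ, hM θ]
      exact (congr_psd (hpd θ) _).mpr h2
    · rw [key2 θ, hM θ]
      exact (congr_psd (hpd θ) _).mpr h1
  · intro h θ
    obtain ⟨h1, h2⟩ := h θ
    have e1 := (congr_psd (hpd θ) (matDeriv W θ + μ • W θ)).mp (by rw [← hM θ, ← key1 θ]; exact h1)
    have e2 := (congr_psd (hpd θ) (μ • W θ - matDeriv W θ)).mp (by rw [← hM θ, ← key2 θ]; exact h2)
    exact ⟨e2, e1⟩
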